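/- Let G be a graph with vertices a₁, a₂ at distance at most r/2. Let o be a closed walk of length at most r in G containing both a₁ and a₂, and let x be a vertex on o. Then every shortest path in G from x to the core (the set of vertices on shortest a₁–a₂ paths) is entirely contained in the ball B_{r/2}(a₁) and in the ball B_{r/2}(a₂). -/

import Mathlib

open SimpleGraph

universe u

namespace LocalSep

variable {V : Type u}

/-- The ball of radius `r/2` around `v`: vertices of distance at most `⌊r/2⌋` from `v`;
if `r` is even, edges joining two vertices of distance exactly `r/2` are removed. -/
def ballVerts (G : SimpleGraph V) (v : V) (r : ℕ) : Set V :=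
  {u | G.Reachable v u ∧ G.dist v u ≤ r / 2}

def ball (G : SimpleGraph V) (v : V) (r : ℕ) : G.Subgraph where
  verts := ballVerts G v r
  Adj u u' := G.Adj u u' ∧ u ∈ ballVerts G v r ∧ u' ∈ ballVerts G v r ∧
    (Even r → ¬(G.dist v u = r / 2 ∧ G.dist v u' = r / 2))
  adj_sub h := h.1
  edge_vert h := h.2.1
  symm := ⟨fun u u' h => ⟨h.1.symm, h.2.2.1, h.2.1, fun he hc => h.2.2.2 he ⟨hc.2, hc.1⟩⟩⟩

/-- `v` is an `r`-local cutvertex if the punctured ball `B_{r/2}(v) - v` is disconnected. -/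
def IsLocalCutvertex (G : SimpleGraph V) (r : ℕ) (v : V) : Prop :=
  ¬ ((ball G v r).deleteVerts {v}).coe.Connected

def HasShortCycle (G : SimpleGraph V) (r : ℕ) : Prop :=
  ∃ (u : V) (c : G.Walk u u), c.IsCycle ∧ c.length ≤ r

/-- A connected graph is `r`-locally 2-connected if it has no `r`-local cutvertex
and contains a cycle of length at most `r`. -/
def LocallyTwoConnected (G : SimpleGraph V) (r : ℕ) : Prop :=
  G.Connected ∧ (∀ v : V, ¬ IsLocalCutvertex G r v) ∧ HasShortCycle G r

/-- The core of `(a₁, a₂)`: all vertices on shortest `a₁`–`a₂` paths. -/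
def core (G : SimpleGraph V) (a₁ a₂ : V) : Set V :=
  {x | ∃ p : G.Walk a₁ a₂, p.IsPath ∧ p.length = G.dist a₁ a₂ ∧ x ∈ p.support}

/-- A walk is contained in a subgraph. -/
def WalkIn {G : SimpleGraph V} (B : G.Subgraph) {x y : V} (p : G.Walk x y) : Prop :=
  p.toSubgraph ≤ B

/-- The label of a vertex `u` in a ball `B`: the set of (supports of) shortest paths
from the core `C` to `u` contained in `B`. -/
def labelIn (G : SimpleGraph V) (B : G.Subgraph) (C : Set V) (u : V) : Set (List V) :=
  {l | ∃ c ∈ C, ∃ p : G.Walk c u, p.IsPath ∧ WalkIn B p ∧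
    (∀ c' ∈ C, ∀ q : G.Walk c' u, q.IsPath → WalkIn B q → p.length ≤ q.length) ∧
    l = p.support}

/-- A potential vertex of the explorer-neighbourhood: a vertex together with a label. -/
abbrev EVert (V : Type u) : Type u := V × Set (List V)

/-- `p` is the copy of the vertex `p.1` in the labelled ball around `a ∈ {a₁, a₂}`. -/
def inCopy (G : SimpleGraph V) (a₁ a₂ : V) (r : ℕ) (a : V) (p : EVert V) : Prop :=
  p.1 ∈ ballVerts G a r ∧ p.2 = labelIn G (ball G a r) (core G a₁ a₂) p.1

/-- Vertices of the explorer-neighbourhood `Expl(a₁,a₂)`. -/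
def explVerts (G : SimpleGraph V) (a₁ a₂ : V) (r : ℕ) : Set (EVert V) :=
  {p | inCopy G a₁ a₂ r a₁ p ∨ inCopy G a₁ a₂ r a₂ p}

/-- The explorer-neighbourhood `Expl(a₁,a₂)`: the union of the two labelled balls,
where two copies of a vertex are identified iff their labels agree. -/
def expl (G : SimpleGraph V) (a₁ a₂ : V) (r : ℕ) : SimpleGraph (EVert V) where
  Adj p q :=
    (inCopy G a₁ a₂ r a₁ p ∧ inCopy G a₁ a₂ r a₁ q ∧ (ball G a₁ r).Adj p.1 q.1) ∨
    (inCopy G a₁ a₂ r a₂ p ∧ inCopy G a₁ a₂ r a₂ q ∧ (ball G a₂ r).Adj p.1 q.1)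
  symm := by
    refine ⟨?_⟩
    intro p q h
    rcases h with ⟨h1, h2, h3⟩ | ⟨h1, h2, h3⟩
    · exact Or.inl ⟨h2, h1, h3.symm⟩
    · exact Or.inr ⟨h2, h1, h3.symm⟩
  loopless := by
    refine ⟨?_⟩
    intro p h
    rcases h with ⟨-, -, h⟩ | ⟨-, -, h⟩ <;> exact G.irrefl h.adj_sub

/-- Vertices of the punctured explorer-neighbourhood `Expl(a₁,a₂) - a₁ - a₂`. -/
def pexplVerts (G : SimpleGraph V) (a₁ a₂ : V) (r : ℕ) : Set (EVert V) :=
  {p | p ∈ explVerts G a₁ a₂ r ∧ p.1 ≠ a₁ ∧ p.1 ≠ a₂}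

/-- The punctured explorer-neighbourhood `Expl(a₁,a₂) - a₁ - a₂`. -/
def pexpl (G : SimpleGraph V) (a₁ a₂ : V) (r : ℕ) :
    SimpleGraph (pexplVerts G a₁ a₂ r) :=
  SimpleGraph.induce (pexplVerts G a₁ a₂ r) (expl G a₁ a₂ r)

/-- `{v,w}` is an `r`-local 2-separator: `v,w` have distance at most `r/2` and the
punctured explorer-neighbourhood is disconnected. -/
def IsLocalTwoSep (G : SimpleGraph V) (r : ℕ) (v w : V) : Prop :=
  v ≠ w ∧ G.Reachable v w ∧ 2 * G.dist v w ≤ r ∧ ¬ (pexpl G v w r).Connected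

/-- The pair `(p,q)` of vertices of `Expl(b₁,b₂)` crosses the local 2-separator `{b₁,b₂}`:
they lie in different components of the punctured explorer-neighbourhood and there is a cycle
of length at most `r` through them containing a copy of `b₁` or `b₂`. -/
def CrossesPair (G : SimpleGraph V) (r : ℕ) (b₁ b₂ : V) (p q : EVert V) : Prop :=
  ∃ (hp : p ∈ pexplVerts G b₁ b₂ r) (hq : q ∈ pexplVerts G b₁ b₂ r),
    ¬ (pexpl G b₁ b₂ r).Reachable ⟨p, hp⟩ ⟨q, hq⟩ ∧
    ∃ (u : EVert V) (c : (expl G b₁ b₂ r).Walk u u), c.IsCycle ∧ c.length ≤ r ∧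
      p ∈ c.support ∧ q ∈ c.support ∧ ∃ z ∈ c.support, z.1 = b₁ ∨ z.1 = b₂

/-- `{a₁,a₂}` crosses `{b₁,b₂}`: some copies of `a₁`, `a₂` cross `{b₁,b₂}`. -/
def Crosses (G : SimpleGraph V) (r : ℕ) (a₁ a₂ b₁ b₂ : V) : Prop :=
  ∃ p q : EVert V, p.1 = a₁ ∧ q.1 = a₂ ∧ CrossesPair G r b₁ b₂ p q

/-- Some copy of `x` lies in the same component of `Expl(v,w) - v - w` as some copy of `y`. -/
def CopyReach (G : SimpleGraph V) (r : ℕ) (v w x y : V) : Prop :=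
  ∃ (p q : EVert V) (hp : p ∈ pexplVerts G v w r) (hq : q ∈ pexplVerts G v w r),
    p.1 = x ∧ q.1 = y ∧ (pexpl G v w r).Reachable ⟨p, hp⟩ ⟨q, hq⟩

/-- A cycle through `a₁` alternating between `{a₁,a₂}` and `{b₁,b₂}`: the four vertices are
distinct and `b₁`, `b₂` lie on different arcs of the cycle between `a₁` and `a₂`. -/
def AltCycle (G : SimpleGraph V) (a₁ a₂ b₁ b₂ : V) (c : G.Walk a₁ a₁) : Prop :=
  c.IsCycle ∧ b₁ ≠ b₂ ∧ b₁ ∉ ({a₁, a₂} : Set V) ∧ b₂ ∉ ({a₁, a₂} : Set V) ∧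
  ∃ (p : G.Walk a₁ a₂) (q : G.Walk a₂ a₁), c = p.append q ∧
    ((b₁ ∈ p.support ∧ b₂ ∈ q.support) ∨ (b₂ ∈ p.support ∧ b₁ ∈ q.support))

/-- `S` is generated over `𝔽₂` by members of `C` (sum = symmetric difference). -/
def GeneratedBy {α : Type*} (C : Set (Set (Sym2 α))) (S : Set (Sym2 α)) : Prop :=
  ∃ l : List (Set (Sym2 α)), (∀ A ∈ l, A ∈ C) ∧ l.foldr symmDiff ∅ = S

/-- The edge set of a walk. -/
def walkEdgeSet {α : Type*} {H : SimpleGraph α} {x y : α} (c : H.Walk x y) : Set (Sym2 α) :=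
  {e | e ∈ c.edges}



lemma split_edge {G : SimpleGraph V} {x c y z : V} (p : G.Walk x c)
    (h : p.toSubgraph.Adj y z) :
    (∃ (w₁ : G.Walk x y) (w₂ : G.Walk z c), w₁.length + 1 + w₂.length = p.length) ∨
    (∃ (w₁ : G.Walk x z) (w₂ : G.Walk y c), w₁.length + 1 + w₂.length = p.length) := by
  induction p with
  | nil => simp [Walk.toSubgraph] at h
  | @cons a b c' hab q ih =>
    simp only [Walk.toSubgraph, Subgraph.sup_adj, subgraphOfAdj_adj] at h
    rcases h with h | h
    · rw [Sym2.eq_iff] at h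
      rcases h with ⟨rfl, rfl⟩ | ⟨rfl, rfl⟩
      · exact Or.inl ⟨Walk.nil, q, by simp [Nat.add_comm]⟩
      · exact Or.inr ⟨Walk.nil, q, by simp [Nat.add_comm]⟩
    · rcases ih h with ⟨w₁, w₂, hw⟩ | ⟨w₁, w₂, hw⟩
      · exact Or.inl ⟨Walk.cons hab w₁, w₂, by simp [Walk.length_cons]; omega⟩
      · exact Or.inr ⟨Walk.cons hab w₁, w₂, by simp [Walk.length_cons]; omega⟩

lemma toSubgraph_le_ball {G : SimpleGraph V} (a : V) (r : ℕ) {x c : V}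
    (p : G.Walk x c) (w : G.Walk a x) (q : G.Walk a c)
    (hsum : w.length + q.length + p.length ≤ r) :
    p.toSubgraph ≤ ball G a r := by
  haveI := Classical.decEq V
  have hvert : ∀ y ∈ p.support, y ∈ ballVerts G a r := by
    intro y hy
    have ht := congrArg Walk.length (p.take_spec hy)
    rw [Walk.length_append] at ht
    have h1 : G.dist a y ≤ w.length + (p.takeUntil y hy).length := by
      have := SimpleGraph.dist_le (w.append (p.takeUntil y hy))
      rwa [Walk.length_append] at this
    have h2 : G.dist a y ≤ q.length + (p.dropUntil y hy).length := by
      have := SimpleGraph.dist_le (q.append (p.dropUntil y hy).reverse)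
      rwa [Walk.length_append, Walk.length_reverse] at this
    exact ⟨⟨w.append (p.takeUntil y hy)⟩, by omega⟩
  refine ⟨fun y hy => hvert y (p.mem_verts_toSubgraph.mp hy), ?_⟩
  intro y z h
  refine ⟨p.toSubgraph.adj_sub h,
    hvert y (p.mem_verts_toSubgraph.mp (p.toSubgraph.edge_vert h)),
    hvert z (p.mem_verts_toSubgraph.mp (p.toSubgraph.edge_vert h.symm)), ?_⟩
  rintro hr ⟨hcy, hcz⟩
  obtain ⟨m, hm⟩ := hr
  rcases split_edge p h with ⟨w₁, w₂, hw⟩ | ⟨w₁, w₂, hw⟩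
  · have h1 : G.dist a y ≤ w.length + w₁.length := by
      have := SimpleGraph.dist_le (w.append w₁)
      rwa [Walk.length_append] at this
    have h2 : G.dist a z ≤ q.length + w₂.length := by
      have := SimpleGraph.dist_le (q.append w₂.reverse)
      rwa [Walk.length_append, Walk.length_reverse] at this
    omega
  · have h1 : G.dist a z ≤ w.length + w₁.length := by
      have := SimpleGraph.dist_le (w.append w₁)
      rwa [Walk.length_append] at this
    have h2 : G.dist a y ≤ q.length + w₂.length := by
      have := SimpleGraph.dist_le (q.append w₂.reverse)
      rwa [Walk.length_append, Walk.length_reverse] at this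
    omega

lemma key_ineq {G : SimpleGraph V} {x a₁ a₂ : V} (o : G.Walk x x)
    (h₁ : a₁ ∈ o.support) (h₂ : a₂ ∈ o.support) :
    G.dist x a₁ + G.dist x a₂ + G.dist a₁ a₂ ≤ o.length := by
  haveI := Classical.decEq V
  have hlen := congrArg Walk.length (o.take_spec h₁)
  rw [Walk.length_append] at hlen
  rw [← o.take_spec h₁, Walk.mem_support_append_iff] at h₂
  rcases h₂ with h | h
  · have e1 : G.dist x a₂ ≤ ((o.takeUntil a₁ h₁).takeUntil a₂ h).length :=
      SimpleGraph.dist_le _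
    have e2 : G.dist a₁ a₂ ≤ ((o.takeUntil a₁ h₁).dropUntil a₂ h).length := by
      have := SimpleGraph.dist_le ((o.takeUntil a₁ h₁).dropUntil a₂ h).reverse
      rwa [Walk.length_reverse] at this
    have e3 : G.dist x a₁ ≤ (o.dropUntil a₁ h₁).length := by
      have := SimpleGraph.dist_le (o.dropUntil a₁ h₁).reverse
      rwa [Walk.length_reverse] at this
    have hl2 := congrArg Walk.length ((o.takeUntil a₁ h₁).take_spec h)
    rw [Walk.length_append] at hl2
    omega
  · have e1 : G.dist x a₁ ≤ (o.takeUntil a₁ h₁).length := SimpleGraph.dist_le _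
    have e2 : G.dist a₁ a₂ ≤ ((o.dropUntil a₁ h₁).takeUntil a₂ h).length :=
      SimpleGraph.dist_le _
    have e3 : G.dist x a₂ ≤ ((o.dropUntil a₁ h₁).dropUntil a₂ h).length := by
      have := SimpleGraph.dist_le ((o.dropUntil a₁ h₁).dropUntil a₂ h).reverse
      rwa [Walk.length_reverse] at this
    have hl2 := congrArg Walk.length ((o.dropUntil a₁ h₁).take_spec h)
    rw [Walk.length_append] at hl2
    omega

/-- Let `a₁, a₂` be at distance at most `r/2`, let `o` be a closed walk of length at most `r`
through `a₁` and `a₂`, and let `x` be a vertex on `o`. Then every shortest path from `x` to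
the core of `(a₁,a₂)` is entirely contained in `B_{r/2}(a₁)` and in `B_{r/2}(a₂)`. -/
theorem stmt5 {V : Type u} (G : SimpleGraph V) (a₁ a₂ : V) (r : ℕ)
    (hreach : G.Reachable a₁ a₂) (hdist : 2 * G.dist a₁ a₂ ≤ r)
    {u : V} (o : G.Walk u u) (ho : o.length ≤ r)
    (ha₁ : a₁ ∈ o.support) (ha₂ : a₂ ∈ o.support)
    {x : V} (hx : x ∈ o.support)
    {c : V} (hc : c ∈ core G a₁ a₂) (p : G.Walk x c) (hp : p.IsPath)
    (hmin : ∀ c' ∈ core G a₁ a₂, ∀ q : G.Walk x c', q.IsPath → p.length ≤ q.length) :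
    p.toSubgraph ≤ ball G a₁ r ∧ p.toSubgraph ≤ ball G a₂ r := by
  haveI := Classical.decEq V
  obtain ⟨p₀, hp₀path, hp₀len, hcsup⟩ := hc
  have hq12 : (p₀.takeUntil c hcsup).length + (p₀.dropUntil c hcsup).length
      = G.dist a₁ a₂ := by
    have := congrArg Walk.length (p₀.take_spec hcsup)
    rw [Walk.length_append] at this
    omega
  have rxa₁ : G.Reachable x a₁ := ⟨p.append (p₀.takeUntil c hcsup).reverse⟩
  have rxa₂ : G.Reachable x a₂ := ⟨p.append (p₀.dropUntil c hcsup)⟩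
  obtain ⟨wA, hwAp, hwAl⟩ := rxa₁.exists_path_of_dist
  obtain ⟨wB, hwBp, hwBl⟩ := rxa₂.exists_path_of_dist
  have hLA : p.length ≤ G.dist x a₁ := by
    rw [← hwAl]; exact hmin a₁ ⟨p₀, hp₀path, hp₀len, p₀.start_mem_support⟩ wA hwAp
  have hLB : p.length ≤ G.dist x a₂ := by
    rw [← hwBl]; exact hmin a₂ ⟨p₀, hp₀path, hp₀len, p₀.end_mem_support⟩ wB hwBp
  have ha₁' : a₁ ∈ ((o.dropUntil x hx).append (o.takeUntil x hx)).support := by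
    rw [Walk.mem_support_append_iff, Or.comm, ← Walk.mem_support_append_iff,
      o.take_spec hx]
    exact ha₁
  have ha₂' : a₂ ∈ ((o.dropUntil x hx).append (o.takeUntil x hx)).support := by
    rw [Walk.mem_support_append_iff, Or.comm, ← Walk.mem_support_append_iff,
      o.take_spec hx]
    exact ha₂
  have hlen' : ((o.dropUntil x hx).append (o.takeUntil x hx)).length ≤ r := by
    have := congrArg Walk.length (o.take_spec hx)
    rw [Walk.length_append] at this
    rw [Walk.length_append]
    omega
  have key : G.dist x a₁ + G.dist x a₂ + G.dist a₁ a₂ ≤ r :=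
    le_trans (key_ineq _ ha₁' ha₂') hlen'
  constructor
  · refine toSubgraph_le_ball a₁ r p wA.reverse (p₀.takeUntil c hcsup) ?_
    rw [Walk.length_reverse, hwAl]
    omega
  · refine toSubgraph_le_ball a₂ r p wB.reverse (p₀.dropUntil c hcsup).reverse ?_
    rw [Walk.length_reverse, Walk.length_reverse, hwBl]
    omega


end LocalSep
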